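/- Let A = R[x,y]/(xy - t^l) with l even, and let i = j = i' = j' = l/2 > 0. The map E_{i,i} ⊗_A E_{i,i} → A defined on generators by ζ₁⊗ξ₁ ↦ x, ζ₁⊗ξ₂ ↦ t^{l/2}, ζ₂⊗ξ₁ ↦ t^{l/2}, ζ₂⊗ξ₂ ↦ y is a well-defined A-module homomorphism. -/

import Mathlib

set_option synthInstance.maxHeartbeats 1000000
set_option maxHeartbeats 1000000

open MvPolynomial TensorProduct

namespace stmt13

variable (R : Type*) [CommRing R] (t : R) (l : ℕ)

/-- `A = R[x,y]/(xy - t^l)`, with `x = X 0`, `y = X 1`. -/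
noncomputable abbrev A := MvPolynomial (Fin 2) R ⧸
  Ideal.span {(X 0 * X 1 - C (t ^ l) : MvPolynomial (Fin 2) R)}

noncomputable def x : A R t l := Ideal.Quotient.mk _ (X 0)
noncomputable def y : A R t l := Ideal.Quotient.mk _ (X 1)
noncomputable def tA : A R t l := Ideal.Quotient.mk _ (C t)

/-- `E a b` is the `A`-module with two generators and relations
`t^b·(first) = x·(second)` and `t^a·(second) = y·(first)`. -/
noncomputable def E (a b : ℕ) :=
  (A R t l × A R t l) ⧸
    (Submodule.span (A R t l) {((tA R t l ^ b, -(x R t l)) : A R t l × A R t l),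
      ((y R t l, -(tA R t l ^ a)) : A R t l × A R t l)})

noncomputable instance (a b : ℕ) : AddCommGroup (E R t l a b) :=
  Submodule.Quotient.addCommGroup _

noncomputable instance (a b : ℕ) : Module (A R t l) (E R t l a b) :=
  Submodule.Quotient.module _

noncomputable def gen₁ (a b : ℕ) : E R t l a b := Submodule.Quotient.mk (1, 0)
noncomputable def gen₂ (a b : ℕ) : E R t l a b := Submodule.Quotient.mk (0, 1)

lemma key_rel : x R t l * y R t l = tA R t l ^ l := by
  have : x R t l * y R t l - tA R t l ^ l = 0 := by
    rw [x, y, tA, ← map_pow, ← map_mul, ← map_sub, ← C_pow,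
      Ideal.Quotient.eq_zero_iff_mem]
    exact Ideal.subset_span rfl
  exact sub_eq_zero.mp this

/-- for `l` even and `i = l/2 > 0`, the assignment `ζ₁⊗ξ₁ ↦ x`,
`ζ₁⊗ξ₂ ↦ t^{l/2}`, `ζ₂⊗ξ₁ ↦ t^{l/2}`, `ζ₂⊗ξ₂ ↦ y` is a well-defined `A`-module
homomorphism `E_{l/2,l/2} ⊗_A E_{l/2,l/2} → A` (the free module `E_{0,0} = A`). -/
theorem stmt13 (m : ℕ) (hm : 0 < m) (hlm : l = 2 * m) :
    ∃ f : (E R t l m m) ⊗[A R t l] (E R t l m m) →ₗ[A R t l] A R t l,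
      f (gen₁ R t l m m ⊗ₜ gen₁ R t l m m) = x R t l ∧
      f (gen₁ R t l m m ⊗ₜ gen₂ R t l m m) = tA R t l ^ m ∧
      f (gen₂ R t l m m ⊗ₜ gen₁ R t l m m) = tA R t l ^ m ∧
      f (gen₂ R t l m m ⊗ₜ gen₂ R t l m m) = y R t l := by
  set X := x R t l with hX
  set Y := y R t l with hY
  set T := tA R t l with hT
  have hxy : X * Y = T ^ (2 * m) := by rw [← hlm]; exact key_rel R t l
  set S : Submodule (A R t l) (A R t l × A R t l) :=
    Submodule.span (A R t l) {((T ^ m, -X) : A R t l × A R t l),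
      ((Y, -(T ^ m)) : A R t l × A R t l)} with hS
  let B : (A R t l × A R t l) →ₗ[A R t l] (A R t l × A R t l) →ₗ[A R t l] A R t l :=
    LinearMap.mk₂ (A R t l)
      (fun p q => p.1 * q.1 * X + p.1 * q.2 * T ^ m + p.2 * q.1 * T ^ m + p.2 * q.2 * Y)
      (by rintro ⟨a, b⟩ ⟨c, d⟩ ⟨e, f⟩; simp only [Prod.mk_add_mk]; ring)
      (by rintro c ⟨a, b⟩ ⟨e, f⟩; simp only [Prod.smul_mk, smul_eq_mul]; ring)
      (by rintro ⟨a, b⟩ ⟨c, d⟩ ⟨e, f⟩; simp only [Prod.mk_add_mk]; ring)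
      (by rintro c ⟨a, b⟩ ⟨e, f⟩; simp only [Prod.smul_mk, smul_eq_mul]; ring)
  have hBapp : ∀ p q : A R t l × A R t l, B p q =
      p.1 * q.1 * X + p.1 * q.2 * T ^ m + p.2 * q.1 * T ^ m + p.2 * q.2 * Y :=
    fun p q => rfl
  have hgenL : ∀ s ∈ S, B s = 0 := by
    intro s hs
    refine Submodule.span_induction ?_ ?_ ?_ ?_ hs
    · rintro p (rfl | rfl) <;> refine LinearMap.ext fun q => ?_ <;>
        rw [hBapp] <;> simp only [LinearMap.zero_apply]
      · linear_combination (-q.2 : A R t l) * hxy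
      · linear_combination (q.1 : A R t l) * hxy
    · simp
    · intro a b _ _ ha hb; simp [ha, hb]
    · intro c a _ ha; simp [ha]; exact LinearMap.ext fun q => by simp
  have hgenR : ∀ p : A R t l × A R t l, ∀ s ∈ S, B p s = 0 := by
    intro p s hs
    refine Submodule.span_induction ?_ ?_ ?_ ?_ hs
    · rintro q (rfl | rfl) <;> rw [hBapp]
      · linear_combination (-p.2 : A R t l) * hxy
      · linear_combination (p.1 : A R t l) * hxy
    · simp
    · intro a b _ _ ha hb; simp [ha, hb]
    · intro c a _ ha; simp [ha]
  have h1 : S ≤ LinearMap.ker B := fun s hs => by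
    simpa [LinearMap.mem_ker] using hgenL s hs
  let B1 := S.liftQ B h1
  have h2 : S ≤ LinearMap.ker B1.flip := by
    intro s hs
    rw [LinearMap.mem_ker]
    refine LinearMap.ext fun q => ?_
    obtain ⟨p, rfl⟩ := Submodule.Quotient.mk_surjective S q
    show B1 (Submodule.Quotient.mk p) s = 0
    rw [Submodule.liftQ_apply]
    exact hgenR p s hs
  let B2 := (S.liftQ B1.flip h2).flip
  refine ⟨TensorProduct.lift B2, ?_, ?_, ?_, ?_⟩
  · show B ((1, 0) : A R t l × A R t l) ((1, 0) : A R t l × A R t l) = X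
    rw [hBapp]; ring
  · show B ((1, 0) : A R t l × A R t l) ((0, 1) : A R t l × A R t l) = T ^ m
    rw [hBapp]; ring
  · show B ((0, 1) : A R t l × A R t l) ((1, 0) : A R t l × A R t l) = T ^ m
    rw [hBapp]; ring
  · show B ((0, 1) : A R t l × A R t l) ((0, 1) : A R t l × A R t l) = Y
    rw [hBapp]; ring

end stmt13
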